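/- Let d ≥ 1 and let H be an octahedral system on d+1 colour classes of d+1 points each. If H contains an isolated edge, i.e. an edge e ∈ H such that no other edge e' ∈ H differs from e in exactly one coordinate, then H has at least d^2 + 1 edges. Equivalently, an octahedral system with d^2 or fewer edges contains no isolated edge. -/

import Mathlib

namespace ColourfulDepth

/-- A colourful edge on `d+1` colour classes, each a copy of `Fin (d+1)`:
`e i` is the chosen point of colour `i`. -/
abbrev Edge (d : ℕ) := Fin (d + 1) → Fin (d + 1)

/-- The number of edges of `H` using points from the `î`-octahedron `{t, t'}`
with `i`-th coordinate `s`. -/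
def usesCount (d : ℕ) (H : Finset (Edge d)) (i : Fin (d + 1)) (t t' : Edge d)
    (s : Fin (d + 1)) : ℕ :=
  (H.filter (fun e => e i = s ∧ ∀ j, j ≠ i → (e j = t j ∨ e j = t' j))).card

/-- `H` is an octahedral system: for every colour `i`, every `î`-octahedron
`{t, t'}` (a pair of `î`-transversals with `t j ≠ t' j` for all `j ≠ i`), and
all `s, s'`, the numbers of edges using points from the octahedron with `i`-th
coordinate `s` resp. `s'` have the same parity. -/
def IsOctahedralSystem (d : ℕ) (H : Finset (Edge d)) : Prop :=
  ∀ i : Fin (d + 1), ∀ t t' : Edge d, (∀ j, j ≠ i → t j ≠ t' j) →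
    ∀ s s' : Fin (d + 1),
      usesCount d H i t t' s % 2 = usesCount d H i t t' s' % 2

/-- `H` has no isolated vertex: every point of every colour lies in some edge. -/
def NoIsolatedVertex (d : ℕ) (H : Finset (Edge d)) : Prop :=
  ∀ i p : Fin (d + 1), ∃ e ∈ H, e i = p

/-- The entry `T_H(t, x)` of the large table: the parity of the number of edges
`e ∈ H` with `e 0 = x` and `e j ∈ {0, t j}` for all `j ≠ 0`. -/
def tableEntry (d : ℕ) (H : Finset (Edge d)) (t : Edge d) (x : Fin (d + 1)) : ZMod 2 :=
  ((H.filter (fun e => e 0 = x ∧ ∀ j, j ≠ 0 → (e j = 0 ∨ e j = t j))).card : ZMod 2)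

/-- The score of `H`: the number of pairs `(t, x)` where `t` is a
`0̂`-transversal disjoint from `t₀ = (∗,0,…,0)` (normalized by `t 0 = 0`),
`x ≠ 0`, and the entry `T_H(t, x)` disagrees with `T_H(t, 0)`. -/
def score (d : ℕ) (H : Finset (Edge d)) : ℕ :=
  (Finset.univ.filter (fun p : Edge d × Fin (d + 1) =>
    p.1 0 = 0 ∧ (∀ j, j ≠ 0 → p.1 j ≠ 0) ∧ p.2 ≠ 0 ∧
      tableEntry d H p.1 p.2 ≠ tableEntry d H p.1 0)).card

/-- `z(e)`: the number of coordinates of `e` equal to `0`. -/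
def zcount (d : ℕ) (e : Edge d) : ℕ :=
  (Finset.univ.filter (fun i : Fin (d + 1) => e i = 0)).card

end ColourfulDepth

open Finset in
lemma aux_prod_ite_pow {α : Type*} [Fintype α] (P : α → Prop) [DecidablePred P] (n : ℕ) :
    (∏ j, (if P j then n else 1)) = n ^ (Finset.univ.filter P).card := by
  rw [Finset.prod_ite, Finset.prod_const, Finset.prod_const, one_pow, mul_one]


open Finset in
open ColourfulDepth in
/-- An octahedral system containing an isolated edge — an edge `e ∈ H` such
that no other edge of `H` differs from `e` in exactly one coordinate — has at
least `d² + 1` edges.  Equivalently, an octahedral system with `d²` or fewer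
edges contains no isolated edge. -/
theorem octahedral_system_isolated_edge_card (d : ℕ) (hd : 1 ≤ d)
    (H : Finset (Edge d)) (hoct : IsOctahedralSystem d H)
    (e : Edge d) (he : e ∈ H)
    (hiso : ∀ e' ∈ H, e' ≠ e →
      (Finset.univ.filter (fun i : Fin (d + 1) => e' i ≠ e i)).card ≠ 1) :
    d ^ 2 + 1 ≤ H.card := by
  classical
  -- every other edge agrees with `e` in at most `d-1` coordinates
  have hagree : ∀ f ∈ H.erase e,
      (univ.filter (fun j : Fin (d+1) => f j = e j)).card + 2 ≤ d + 1 := by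
    intro f hf
    obtain ⟨hfe, hfH⟩ := Finset.mem_erase.mp hf
    have h1 := hiso f hfH hfe
    have h0 : (univ.filter (fun i : Fin (d+1) => f i ≠ e i)).card ≠ 0 := by
      intro h
      apply hfe
      funext i
      by_contra hi
      have hmem : i ∈ univ.filter (fun i : Fin (d+1) => f i ≠ e i) := by
        simp [hi]
      rw [Finset.card_eq_zero] at h
      rw [h] at hmem
      exact absurd hmem (Finset.notMem_empty i)
    have hsum : (univ.filter (fun j : Fin (d+1) => f j = e j)).card
        + (univ.filter (fun j : Fin (d+1) => ¬ (f j = e j))).card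
        = Fintype.card (Fin (d+1)) := by
      rw [Finset.card_filter_add_card_filter_not, Finset.card_univ]
    rw [Fintype.card_fin] at hsum
    have : (univ.filter (fun j : Fin (d+1) => ¬ (f j = e j))).card
        = (univ.filter (fun i : Fin (d+1) => f i ≠ e i)).card := rfl
    omega
  -- the big set of cells
  set Tset : Finset (Edge d) :=
    Fintype.piFinset (fun j : Fin (d+1) =>
      if j = 0 then {e 0} else Finset.univ.erase (e j)) with hTdef
  set S : Finset (Edge d × Fin (d + 1)) := Tset ×ˢ (Finset.univ.erase (e 0)) with hSdef
  have hScard : S.card = d ^ d * d := by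
    rw [hSdef, Finset.card_product]
    congr 1
    · rw [hTdef, Fintype.card_piFinset]
      have : ∀ j : Fin (d+1),
          ((if j = 0 then ({e 0} : Finset (Fin (d+1))) else Finset.univ.erase (e j)).card)
          = (if j = 0 then 1 else d) := by
        intro j
        by_cases h : j = 0 <;>
          simp [h, Finset.card_erase_of_mem, Finset.card_univ]
      rw [Finset.prod_congr rfl (fun j _ => this j)]
      rw [Fin.prod_univ_succ]
      simp [Fin.succ_ne_zero]
    · simp [Finset.card_erase_of_mem, Finset.card_univ]
  -- each cell has a witness edge
  have hsub : S ⊆ (H.erase e).biUnion (fun f => S.filter (fun p =>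
      (f 0 = p.2 ∨ f 0 = e 0) ∧ ∀ j, j ≠ 0 → (f j = e j ∨ f j = p.1 j))) := by
    intro p hp
    obtain ⟨ht, hx⟩ := Finset.mem_product.mp hp
    have hx0 : p.2 ≠ e 0 := (Finset.mem_erase.mp hx).1
    have htj : ∀ j, j ≠ 0 → e j ≠ p.1 j := by
      intro j hj h
      have hmem := (Fintype.mem_piFinset.mp ht) j
      rw [if_neg hj] at hmem
      exact (Finset.mem_erase.mp hmem).1 h.symm
    have hpar := hoct 0 e p.1 htj p.2 (e 0)
    simp only [usesCount] at hpar
    by_contra hnot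
    simp only [Finset.mem_biUnion, not_exists] at hnot
    have hQx : H.filter (fun f => f 0 = p.2 ∧ ∀ j, j ≠ 0 → (f j = e j ∨ f j = p.1 j))
        = ∅ := by
      rw [Finset.eq_empty_iff_forall_notMem]
      intro f hf
      obtain ⟨hfH, hf0, hfj⟩ := Finset.mem_filter.mp hf
      have hfe : f ≠ e := by
        intro h; subst h; exact hx0 hf0.symm
      exact hnot f ⟨Finset.mem_erase.mpr ⟨hfe, hfH⟩,
        Finset.mem_filter.mpr ⟨hp, Or.inl hf0, hfj⟩⟩
    have hQ0 : H.filter (fun f => f 0 = e 0 ∧ ∀ j, j ≠ 0 → (f j = e j ∨ f j = p.1 j))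
        = {e} := by
      apply Finset.Subset.antisymm
      · intro f hf
        obtain ⟨hfH, hf0, hfj⟩ := Finset.mem_filter.mp hf
        rw [Finset.mem_singleton]
        by_contra hfe
        exact hnot f ⟨Finset.mem_erase.mpr ⟨hfe, hfH⟩,
          Finset.mem_filter.mpr ⟨hp, Or.inr hf0, hfj⟩⟩
      · intro f hf
        rw [Finset.mem_singleton] at hf
        subst hf
        exact Finset.mem_filter.mpr ⟨he, rfl, fun j _ => Or.inl rfl⟩
    rw [hQx, hQ0] at hpar
    simp at hpar
  -- each edge witnesses at most d^(d-1) cells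
  have hbound : ∀ f ∈ H.erase e, (S.filter (fun p =>
      (f 0 = p.2 ∨ f 0 = e 0) ∧ ∀ j, j ≠ 0 → (f j = e j ∨ f j = p.1 j))).card
      ≤ d ^ (d - 1) := by
    intro f hf
    have hC := hagree f hf
    set k : ℕ := (univ.filter (fun j : Fin (d+1) => j ≠ 0 ∧ f j = e j)).card with hk
    set Tf : Finset (Edge d) := Fintype.piFinset (fun j : Fin (d+1) =>
      if j = 0 then {e 0} else if f j = e j then Finset.univ.erase (e j) else {f j})
      with hTf
    have hTfcard : Tf.card = d ^ k := by
      rw [hTf, Fintype.card_piFinset]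
      have : ∀ j : Fin (d+1),
          ((if j = 0 then ({e 0} : Finset (Fin (d+1)))
            else if f j = e j then Finset.univ.erase (e j) else {f j}).card)
          = (if j ≠ 0 ∧ f j = e j then d else 1) := by
        intro j
        by_cases h0 : j = 0
        · simp [h0]
        · by_cases h1 : f j = e j <;>
            simp [h0, h1, Finset.card_erase_of_mem, Finset.card_univ]
      rw [Finset.prod_congr rfl (fun j _ => this j), aux_prod_ite_pow]
    have hTfmem : ∀ p : Edge d × Fin (d+1), p ∈ S →
        ((f 0 = p.2 ∨ f 0 = e 0) ∧ ∀ j, j ≠ 0 → (f j = e j ∨ f j = p.1 j)) →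
        p.1 ∈ Tf := by
      intro p hp ⟨_, hcond⟩
      obtain ⟨ht, _⟩ := Finset.mem_product.mp hp
      rw [hTf, Fintype.mem_piFinset]
      intro j
      by_cases h0 : j = 0
      · have := (Fintype.mem_piFinset.mp ht) j
        rw [if_pos h0] at this
        rw [if_pos h0]; exact this
      · rw [if_neg h0]
        by_cases h1 : f j = e j
        · rw [if_pos h1]
          have := (Fintype.mem_piFinset.mp ht) j
          rw [if_neg h0] at this
          exact this
        · rw [if_neg h1]
          rcases hcond j h0 with h | h
          · exact absurd h h1
          · simp [h.symm]
    -- bound on k via the agreement count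
    have hkC : (Finset.univ.filter (fun j : Fin (d+1) => j ≠ 0 ∧ f j = e j))
        ⊆ (Finset.univ.filter (fun j : Fin (d+1) => f j = e j)) := by
      intro j hj
      simp only [Finset.mem_filter] at hj ⊢
      exact ⟨hj.1, hj.2.2⟩
    by_cases hf0 : f 0 = e 0
    · -- x ranges over d values, but k ≤ d - 2
      have hk2 : k + 1 ≤ (Finset.univ.filter (fun j : Fin (d+1) => f j = e j)).card := by
        have h0mem : (0 : Fin (d+1)) ∈ Finset.univ.filter (fun j : Fin (d+1) => f j = e j) := by
          simp [hf0]
        have h0nmem : (0 : Fin (d+1)) ∉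
            Finset.univ.filter (fun j : Fin (d+1) => j ≠ 0 ∧ f j = e j) := by
          simp
        have hins : insert (0 : Fin (d+1))
            (Finset.univ.filter (fun j : Fin (d+1) => j ≠ 0 ∧ f j = e j))
            ⊆ Finset.univ.filter (fun j : Fin (d+1) => f j = e j) := by
          intro j hj
          rcases Finset.mem_insert.mp hj with h | h
          · subst h; exact h0mem
          · exact hkC h
        calc k + 1 = (insert (0 : Fin (d+1))
            (Finset.univ.filter (fun j : Fin (d+1) => j ≠ 0 ∧ f j = e j))).card := by
              rw [Finset.card_insert_of_notMem h0nmem, hk]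
          _ ≤ _ := Finset.card_le_card hins
      have hsubTf : (S.filter (fun p =>
          (f 0 = p.2 ∨ f 0 = e 0) ∧ ∀ j, j ≠ 0 → (f j = e j ∨ f j = p.1 j)))
          ⊆ Tf ×ˢ (Finset.univ.erase (e 0)) := by
        intro p hp
        obtain ⟨hpS, hcond⟩ := Finset.mem_filter.mp hp
        obtain ⟨_, hx⟩ := Finset.mem_product.mp hpS
        exact Finset.mem_product.mpr ⟨hTfmem p hpS hcond, hx⟩
      calc (S.filter _).card ≤ (Tf ×ˢ (Finset.univ.erase (e 0))).card :=
            Finset.card_le_card hsubTf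
        _ = d ^ k * d := by
            rw [Finset.card_product, hTfcard]
            congr 1
            simp [Finset.card_erase_of_mem, Finset.card_univ]
        _ = d ^ (k + 1) := by ring
        _ ≤ d ^ (d - 1) := Nat.pow_le_pow_right hd (by omega)
    · -- x is forced to be f 0, k ≤ d - 1
      have hsubTf : (S.filter (fun p =>
          (f 0 = p.2 ∨ f 0 = e 0) ∧ ∀ j, j ≠ 0 → (f j = e j ∨ f j = p.1 j)))
          ⊆ Tf ×ˢ ({f 0} : Finset (Fin (d+1))) := by
        intro p hp
        obtain ⟨hpS, hcond⟩ := Finset.mem_filter.mp hp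
        refine Finset.mem_product.mpr ⟨hTfmem p hpS hcond, ?_⟩
        rcases hcond.1 with h | h
        · simp [h.symm]
        · exact absurd h hf0
      have hkd : k ≤ d - 1 := by
        have := Finset.card_le_card hkC
        omega
      calc (S.filter _).card ≤ (Tf ×ˢ ({f 0} : Finset (Fin (d+1)))).card :=
            Finset.card_le_card hsubTf
        _ = d ^ k := by rw [Finset.card_product, hTfcard]; simp
        _ ≤ d ^ (d - 1) := Nat.pow_le_pow_right hd hkd
  -- put it together
  have hmain : d ^ d * d ≤ (H.erase e).card * d ^ (d - 1) := by
    calc d ^ d * d = S.card := hScard.symm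
      _ ≤ ((H.erase e).biUnion _).card := Finset.card_le_card hsub
      _ ≤ ∑ f ∈ H.erase e, (S.filter (fun p =>
          (f 0 = p.2 ∨ f 0 = e 0) ∧ ∀ j, j ≠ 0 → (f j = e j ∨ f j = p.1 j))).card :=
            Finset.card_biUnion_le
      _ ≤ ∑ _f ∈ H.erase e, d ^ (d - 1) := Finset.sum_le_sum hbound
      _ = (H.erase e).card * d ^ (d - 1) := by rw [Finset.sum_const, smul_eq_mul]
  have hpow : d ^ d * d = d ^ 2 * d ^ (d - 1) := by
    rw [← pow_succ, ← pow_add]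
    congr 1
    omega
  rw [hpow] at hmain
  have hpos : 0 < d ^ (d - 1) := Nat.pow_pos hd
  have hd2 : d ^ 2 ≤ (H.erase e).card :=
    Nat.le_of_mul_le_mul_right hmain hpos
  rw [Finset.card_erase_of_mem he] at hd2
  have : 1 ≤ H.card := Finset.card_pos.mpr ⟨e, he⟩
  omega
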